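/- Let A, B be real n₁ × n₂ matrices, P_T the tangent-space projection at A and P_T^⊥ its orthogonal complement. Then ‖A‖_* − ‖B‖_* ≤ ‖P_T(A − B)‖_* − ‖P_T^⊥(A − B)‖_*. -/

import Mathlib

open Matrix

noncomputable def singVals {m n : ℕ} (A : Matrix (Fin m) (Fin n) ℝ) : Fin n → ℝ :=
  fun i => Real.sqrt (((by simpa [Matrix.conjTranspose_eq_transpose_of_trivial] using Matrix.isHermitian_conjTranspose_mul_self A : (Aᵀ * A).IsHermitian)).eigenvalues i)

noncomputable def nuclearNorm {m n : ℕ} (A : Matrix (Fin m) (Fin n) ℝ) : ℝ :=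
  ∑ i, singVals A i

noncomputable def frobNorm {m n : ℕ} (A : Matrix (Fin m) (Fin n) ℝ) : ℝ :=
  Real.sqrt (∑ i, ∑ j, (A i j) ^ 2)


section Aux
variable {m n r : ℕ}

lemma hermT (X : Matrix (Fin m) (Fin n) ℝ) : (Xᵀ * X).IsHermitian := by
  simpa [Matrix.conjTranspose_eq_transpose_of_trivial] using Matrix.isHermitian_conjTranspose_mul_self X

noncomputable def lamE (X : Matrix (Fin m) (Fin n) ℝ) : Fin n → ℝ :=
  (hermT X).eigenvalues

noncomputable def QE (X : Matrix (Fin m) (Fin n) ℝ) : Matrix (Fin n) (Fin n) ℝ :=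
  ((hermT X).eigenvectorUnitary : Matrix (Fin n) (Fin n) ℝ)

lemma QE_tl (X : Matrix (Fin m) (Fin n) ℝ) : (QE X)ᵀ * QE X = 1 := by
  have := Unitary.coe_star_mul_self ((hermT X).eigenvectorUnitary)
  simpa [QE, Matrix.star_eq_conjTranspose, Matrix.conjTranspose_eq_transpose_of_trivial] using this

lemma QE_tr (X : Matrix (Fin m) (Fin n) ℝ) : QE X * (QE X)ᵀ = 1 := by
  have := Unitary.coe_mul_star_self ((hermT X).eigenvectorUnitary)
  simpa [QE, Matrix.star_eq_conjTranspose, Matrix.conjTranspose_eq_transpose_of_trivial] using this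

lemma specE (X : Matrix (Fin m) (Fin n) ℝ) :
    Xᵀ * X = QE X * Matrix.diagonal (lamE X) * (QE X)ᵀ := by
  have := (hermT X).spectral_theorem
  simpa [QE, lamE, Matrix.star_eq_conjTranspose, Matrix.conjTranspose_eq_transpose_of_trivial]
    using this

lemma colsq (X : Matrix (Fin m) (Fin n) ℝ) (i : Fin n) :
    ∑ j, (X * QE X) j i ^ 2 = lamE X i := by
  have h : (X * QE X)ᵀ * (X * QE X) = Matrix.diagonal (lamE X) := by
    calc (X * QE X)ᵀ * (X * QE X)
        = (QE X)ᵀ * (Xᵀ * X) * QE X := by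
          rw [Matrix.transpose_mul]; simp only [← Matrix.mul_assoc]
      _ = (QE X)ᵀ * (QE X * Matrix.diagonal (lamE X) * (QE X)ᵀ) * QE X := by rw [specE]
      _ = ((QE X)ᵀ * QE X) * Matrix.diagonal (lamE X) * ((QE X)ᵀ * QE X) := by
          simp only [Matrix.mul_assoc]
      _ = Matrix.diagonal (lamE X) := by rw [QE_tl]; simp
  have h2 := congrFun (congrFun h i) i
  simp only [Matrix.mul_apply, Matrix.transpose_apply, Matrix.diagonal_apply_eq] at h2
  simpa [Matrix.mul_apply, pow_two] using h2

lemma lamE_nonneg (X : Matrix (Fin m) (Fin n) ℝ) (i : Fin n) : 0 ≤ lamE X i := by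
  rw [← colsq]; positivity

lemma nuclearNorm_eq (X : Matrix (Fin m) (Fin n) ℝ) :
    nuclearNorm X = ∑ i, Real.sqrt (lamE X i) := rfl

lemma dot_mulVec' {a b : ℕ} (A : Matrix (Fin a) (Fin b) ℝ) (v : Fin b → ℝ) (w : Fin a → ℝ) :
    (A *ᵥ v) ⬝ᵥ w = v ⬝ᵥ (Aᵀ *ᵥ w) := by
  simp only [dotProduct, Matrix.mulVec, dotProduct, Matrix.transpose_apply,
    Finset.sum_mul, Finset.mul_sum]
  rw [Finset.sum_comm]
  congr 1; ext j; congr 1; ext i; ring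

lemma proj_contraction (P : Matrix (Fin n) (Fin n) ℝ) (hPs : Pᵀ = P) (hPi : P * P = P)
    (v : Fin n → ℝ) : v ⬝ᵥ (P *ᵥ v) ≤ v ⬝ᵥ v := by
  have h1 : (P *ᵥ v) ⬝ᵥ (P *ᵥ v) = v ⬝ᵥ (P *ᵥ v) := by
    rw [dot_mulVec', Matrix.mulVec_mulVec, hPs, hPi]
  have hnn : 0 ≤ (P *ᵥ v) ⬝ᵥ (P *ᵥ v) :=
    Finset.sum_nonneg fun i _ => mul_self_nonneg _
  have hcs : v ⬝ᵥ (P *ᵥ v) ≤ Real.sqrt (v ⬝ᵥ v) * Real.sqrt ((P *ᵥ v) ⬝ᵥ (P *ᵥ v)) := by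
    have := Real.sum_mul_le_sqrt_mul_sqrt Finset.univ v (P *ᵥ v)
    simpa [dotProduct, pow_two] using this
  have hv0 : (0:ℝ) ≤ v ⬝ᵥ v := Finset.sum_nonneg fun i _ => mul_self_nonneg _
  set a := Real.sqrt (v ⬝ᵥ v) with ha
  set b := Real.sqrt ((P *ᵥ v) ⬝ᵥ (P *ᵥ v)) with hb
  have hva : v ⬝ᵥ v = a ^ 2 := (Real.sq_sqrt hv0).symm
  have hvb : (P *ᵥ v) ⬝ᵥ (P *ᵥ v) = b ^ 2 := by rw [hb, Real.sq_sqrt hnn]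
  have ha0 : 0 ≤ a := Real.sqrt_nonneg _
  have hb0 : 0 ≤ b := Real.sqrt_nonneg _
  rw [← h1, hvb] at hcs ⊢
  rw [hva]
  nlinarith [sq_nonneg (a - b), sq_nonneg (a + b)]

lemma contraction_of (W : Matrix (Fin m) (Fin n) ℝ) (P : Matrix (Fin n) (Fin n) ℝ)
    (h : Wᵀ * W = P) (hPs : Pᵀ = P) (hPi : P * P = P) (v : Fin n → ℝ) :
    (W *ᵥ v) ⬝ᵥ (W *ᵥ v) ≤ v ⬝ᵥ v := by
  rw [dot_mulVec', Matrix.mulVec_mulVec, h]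
  exact proj_contraction P hPs hPi v

lemma QtQ_cancel {k : ℕ} (X : Matrix (Fin m) (Fin n) ℝ) (Z : Matrix (Fin n) (Fin k) ℝ) :
    (QE X)ᵀ * (QE X * Z) = Z := by rw [← Matrix.mul_assoc, QE_tl, Matrix.one_mul]

lemma dual_bound (X W : Matrix (Fin m) (Fin n) ℝ)
    (hW : ∀ v : Fin n → ℝ, (W *ᵥ v) ⬝ᵥ (W *ᵥ v) ≤ v ⬝ᵥ v) :
    Matrix.trace (Wᵀ * X) ≤ nuclearNorm X := by
  have key : Matrix.trace (Wᵀ * X) = ∑ i, ∑ j, (W * QE X) j i * (X * QE X) j i := by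
    have h1 : Wᵀ * X = Wᵀ * X * QE X * (QE X)ᵀ := by
      rw [Matrix.mul_assoc, QE_tr, Matrix.mul_one]
    rw [h1, Matrix.trace_mul_comm]
    have h2 : (QE X)ᵀ * (Wᵀ * X * QE X) = (W * QE X)ᵀ * (X * QE X) := by
      rw [Matrix.transpose_mul]; simp only [← Matrix.mul_assoc]
    rw [h2]
    simp only [Matrix.trace, Matrix.diag, Matrix.mul_apply, Matrix.transpose_apply]
  have hterm : ∀ i, ∑ j, (W * QE X) j i * (X * QE X) j i ≤ Real.sqrt (lamE X i) := by
    intro i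
    have hcs := Real.sum_mul_le_sqrt_mul_sqrt Finset.univ
      (fun j => (W * QE X) j i) (fun j => (X * QE X) j i)
    have hWcol : ∑ j, (W * QE X) j i ^ 2 ≤ 1 := by
      have hup : (fun j => (W * QE X) j i) = W *ᵥ (fun k => QE X k i) := by
        ext j; simp [Matrix.mul_apply, Matrix.mulVec, dotProduct]
      have h1 : ∑ j, (W * QE X) j i ^ 2
          = (W *ᵥ (fun k => QE X k i)) ⬝ᵥ (W *ᵥ (fun k => QE X k i)) := by
        rw [← hup]; simp [dotProduct, pow_two]
      have h2 : (fun k => QE X k i) ⬝ᵥ (fun k => QE X k i) = 1 := by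
        have h3 := congrFun (congrFun (QE_tl X) i) i
        simpa [Matrix.mul_apply, Matrix.transpose_apply, dotProduct, Matrix.one_apply] using h3
      rw [h1, ← h2]; exact hW _
    calc ∑ j, (W * QE X) j i * (X * QE X) j i
        ≤ Real.sqrt (∑ j, (W * QE X) j i ^ 2) * Real.sqrt (∑ j, (X * QE X) j i ^ 2) := hcs
      _ ≤ 1 * Real.sqrt (lamE X i) := by
          rw [colsq]
          exact mul_le_mul_of_nonneg_right (Real.sqrt_le_one.mpr hWcol) (Real.sqrt_nonneg _)
      _ = Real.sqrt (lamE X i) := one_mul _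
  rw [key, nuclearNorm_eq]
  exact Finset.sum_le_sum fun i _ => hterm i

noncomputable def gE (X : Matrix (Fin m) (Fin n) ℝ) : Fin n → ℝ :=
  fun i => if lamE X i = 0 then 0 else (Real.sqrt (lamE X i))⁻¹

noncomputable def eE (X : Matrix (Fin m) (Fin n) ℝ) : Fin n → ℝ :=
  fun i => if lamE X i = 0 then 0 else 1

noncomputable def SE (X : Matrix (Fin m) (Fin n) ℝ) : Matrix (Fin n) (Fin n) ℝ :=
  QE X * Matrix.diagonal (gE X) * (QE X)ᵀ

noncomputable def WE (X : Matrix (Fin m) (Fin n) ℝ) : Matrix (Fin m) (Fin n) ℝ :=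
  X * SE X

lemma SE_symm (X : Matrix (Fin m) (Fin n) ℝ) : (SE X)ᵀ = SE X := by
  simp [SE, Matrix.transpose_mul, Matrix.diagonal_transpose, Matrix.mul_assoc]

lemma conjQ_mul (X : Matrix (Fin m) (Fin n) ℝ) (f h : Fin n → ℝ) :
    (QE X * Matrix.diagonal f * (QE X)ᵀ) * (QE X * Matrix.diagonal h * (QE X)ᵀ)
      = QE X * Matrix.diagonal (fun i => f i * h i) * (QE X)ᵀ := by
  have : Matrix.diagonal f * ((QE X)ᵀ * (QE X * (Matrix.diagonal h * (QE X)ᵀ)))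
      = Matrix.diagonal (fun i => f i * h i) * (QE X)ᵀ := by
    rw [QtQ_cancel, ← Matrix.mul_assoc, Matrix.diagonal_mul_diagonal]
  simp only [Matrix.mul_assoc]
  rw [this]

lemma conjQ_trace (X : Matrix (Fin m) (Fin n) ℝ) (f : Fin n → ℝ) :
    Matrix.trace (QE X * Matrix.diagonal f * (QE X)ᵀ) = ∑ i, f i := by
  rw [Matrix.trace_mul_comm, ← Matrix.mul_assoc, QE_tl, Matrix.one_mul, Matrix.trace_diagonal]

lemma WEtX (X : Matrix (Fin m) (Fin n) ℝ) :
    (WE X)ᵀ * X = QE X * Matrix.diagonal (fun i => gE X i * lamE X i) * (QE X)ᵀ := by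
  have h0 : (WE X)ᵀ * X
      = (QE X * Matrix.diagonal (gE X) * (QE X)ᵀ)
        * (QE X * Matrix.diagonal (lamE X) * (QE X)ᵀ) := by
    rw [WE, Matrix.transpose_mul, SE_symm, Matrix.mul_assoc, ← SE, specE, SE]
  rw [h0, conjQ_mul]

lemma trace_WEt (X : Matrix (Fin m) (Fin n) ℝ) :
    Matrix.trace ((WE X)ᵀ * X) = nuclearNorm X := by
  rw [WEtX, conjQ_trace, nuclearNorm_eq]
  refine Finset.sum_congr rfl fun i _ => ?_
  by_cases h : lamE X i = 0
  · simp [gE, h]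
  · have hpos : 0 < lamE X i := lt_of_le_of_ne (lamE_nonneg X i) (Ne.symm h)
    have hs : (0:ℝ) < Real.sqrt (lamE X i) := Real.sqrt_pos.mpr hpos
    simp only [gE, if_neg h]
    rw [inv_mul_eq_iff_eq_mul₀ hs.ne']
    exact (Real.mul_self_sqrt hpos.le).symm

lemma WEtWE (X : Matrix (Fin m) (Fin n) ℝ) :
    (WE X)ᵀ * WE X = QE X * Matrix.diagonal (eE X) * (QE X)ᵀ := by
  have h0 : (WE X)ᵀ * WE X = ((WE X)ᵀ * X) * SE X := by
    rw [WE, ← Matrix.mul_assoc]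
  have hfe : (fun i => (gE X i * lamE X i) * gE X i) = eE X := by
    funext i
    by_cases h : lamE X i = 0
    · simp [gE, eE, h]
    · have hpos : 0 < lamE X i := lt_of_le_of_ne (lamE_nonneg X i) (Ne.symm h)
      have hs : (0:ℝ) < Real.sqrt (lamE X i) := Real.sqrt_pos.mpr hpos
      have hms := Real.mul_self_sqrt hpos.le
      simp only [gE, eE, if_neg h]
      field_simp
      rw [Real.sq_sqrt hpos.le]
  rw [h0, WEtX, SE, conjQ_mul, hfe]

lemma diag_kill {k : ℕ} (lam f : Fin n → ℝ) (Y : Matrix (Fin n) (Fin k) ℝ)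
    (h : Matrix.diagonal lam * Y = 0) (hf : ∀ i, lam i = 0 → f i = 0) :
    Matrix.diagonal f * Y = 0 := by
  ext i j
  have h2 := congrFun (congrFun h i) j
  simp only [Matrix.diagonal_mul, Matrix.zero_apply] at h2 ⊢
  by_cases hl : lam i = 0
  · rw [hf i hl, zero_mul]
  · rw [mul_eq_zero] at h2
    rcases h2 with h2 | h2
    · exact absurd h2 hl
    · rw [h2, mul_zero]

lemma QtV_kill {k : ℕ} (X : Matrix (Fin m) (Fin n) ℝ) (V : Matrix (Fin n) (Fin k) ℝ)
    (hXV : X * V = 0) (f : Fin n → ℝ) (hf : ∀ i, lamE X i = 0 → f i = 0) :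
    Matrix.diagonal f * ((QE X)ᵀ * V) = 0 := by
  have h1 : Xᵀ * X * V = 0 := by rw [Matrix.mul_assoc, hXV, Matrix.mul_zero]
  rw [specE] at h1
  simp only [Matrix.mul_assoc] at h1
  have h2 : Matrix.diagonal (lamE X) * ((QE X)ᵀ * V) = 0 := by
    calc Matrix.diagonal (lamE X) * ((QE X)ᵀ * V)
        = (QE X)ᵀ * (QE X * (Matrix.diagonal (lamE X) * ((QE X)ᵀ * V))) := (QtQ_cancel _ _).symm
      _ = (QE X)ᵀ * (0 : Matrix (Fin n) (Fin k) ℝ) := by rw [h1]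
      _ = 0 := Matrix.mul_zero _
  exact diag_kill (lamE X) f _ h2 hf

lemma SEV_zero {k : ℕ} (X : Matrix (Fin m) (Fin n) ℝ) (V : Matrix (Fin n) (Fin k) ℝ)
    (hXV : X * V = 0) : SE X * V = 0 := by
  have h := QtV_kill X V hXV (gE X) (fun i hi => by simp [gE, hi])
  rw [SE]
  simp only [Matrix.mul_assoc]
  rw [h, Matrix.mul_zero]

lemma eEQtV_zero {k : ℕ} (X : Matrix (Fin m) (Fin n) ℝ) (V : Matrix (Fin n) (Fin k) ℝ)
    (hXV : X * V = 0) : Matrix.diagonal (eE X) * ((QE X)ᵀ * V) = 0 :=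
  QtV_kill X V hXV (eE X) (fun i hi => by simp [eE, hi])

lemma WEV_zero {k : ℕ} (X : Matrix (Fin m) (Fin n) ℝ) (V : Matrix (Fin n) (Fin k) ℝ)
    (hXV : X * V = 0) : WE X * V = 0 := by
  rw [WE, Matrix.mul_assoc, SEV_zero X V hXV, Matrix.mul_zero]

lemma eE_mul_self (X : Matrix (Fin m) (Fin n) ℝ) :
    (fun i => eE X i * eE X i) = eE X := by
  funext i; by_cases h : lamE X i = 0 <;> simp [eE, h]

lemma Pe_symm (X : Matrix (Fin m) (Fin n) ℝ) :
    (QE X * Matrix.diagonal (eE X) * (QE X)ᵀ)ᵀ = QE X * Matrix.diagonal (eE X) * (QE X)ᵀ := by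
  simp [Matrix.transpose_mul, Matrix.diagonal_transpose, Matrix.transpose_transpose,
    Matrix.mul_assoc]

lemma Pe_idem (X : Matrix (Fin m) (Fin n) ℝ) :
    (QE X * Matrix.diagonal (eE X) * (QE X)ᵀ) * (QE X * Matrix.diagonal (eE X) * (QE X)ᵀ)
      = QE X * Matrix.diagonal (eE X) * (QE X)ᵀ := by
  rw [conjQ_mul, eE_mul_self]

lemma WE_contr (X : Matrix (Fin m) (Fin n) ℝ) (v : Fin n → ℝ) :
    (WE X *ᵥ v) ⬝ᵥ (WE X *ᵥ v) ≤ v ⬝ᵥ v :=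
  contraction_of (WE X) _ (WEtWE X) (Pe_symm X) (Pe_idem X) v

end Aux

/-- Projection onto the tangent space of the set of low-rank matrices at a
matrix with reduced SVD given by column-orthonormal `U` and `V`. -/
def PT {n₁ n₂ r : ℕ} (U : Matrix (Fin n₁) (Fin r) ℝ) (V : Matrix (Fin n₂) (Fin r) ℝ)
    (B : Matrix (Fin n₁) (Fin n₂) ℝ) : Matrix (Fin n₁) (Fin n₂) ℝ :=
  U * Uᵀ * B + B * (V * Vᵀ) - U * Uᵀ * B * (V * Vᵀ)

/-- `‖A‖_* − ‖B‖_* ≤ ‖P_T(A−B)‖_* − ‖P_T^⊥(A−B)‖_*`. -/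
theorem stmt15 {n₁ n₂ r : ℕ} (A : Matrix (Fin n₁) (Fin n₂) ℝ)
    (U : Matrix (Fin n₁) (Fin r) ℝ) (V : Matrix (Fin n₂) (Fin r) ℝ)
    (σ : Fin r → ℝ) (hσ : ∀ i, 0 < σ i)
    (hU : Uᵀ * U = 1) (hV : Vᵀ * V = 1)
    (hA : A = U * Matrix.diagonal σ * Vᵀ)
    (B : Matrix (Fin n₁) (Fin n₂) ℝ) :
    nuclearNorm A - nuclearNorm B ≤
      nuclearNorm (PT U V (A - B)) - nuclearNorm ((A - B) - PT U V (A - B)) := by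
  set D := A - B with hD
  set PD := PT U V D with hPD
  set M := D - PD with hM
  have hUtM : Uᵀ * M = 0 := by
    rw [hM, hPD, PT]
    simp only [Matrix.mul_sub, Matrix.mul_add, ← Matrix.mul_assoc]
    rw [hU]
    simp only [Matrix.one_mul]
    abel
  have hMV : M * V = 0 := by
    rw [hM, hPD, PT]
    simp only [Matrix.sub_mul, Matrix.add_mul, Matrix.mul_assoc]
    rw [hV]
    simp only [Matrix.mul_one]
    abel
  have hUtW : Uᵀ * WE M = 0 := by
    rw [WE, ← Matrix.mul_assoc, hUtM, Matrix.zero_mul]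
  have hWtU : (WE M)ᵀ * U = 0 := by
    have h := congrArg Matrix.transpose hUtW
    simpa [Matrix.transpose_mul] using h
  have heQtV : Matrix.diagonal (eE M) * ((QE M)ᵀ * V) = 0 := eEQtV_zero M V hMV
  -- the projection P
  have e1 : (U * Vᵀ)ᵀ * (U * Vᵀ) = V * Vᵀ := by
    rw [Matrix.transpose_mul, Matrix.transpose_transpose]
    calc V * Uᵀ * (U * Vᵀ) = V * ((Uᵀ * U) * Vᵀ) := by simp only [Matrix.mul_assoc]
      _ = V * Vᵀ := by rw [hU, Matrix.one_mul]
  have e2 : (U * Vᵀ)ᵀ * WE M = 0 := by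
    rw [Matrix.transpose_mul, Matrix.transpose_transpose, Matrix.mul_assoc, hUtW,
      Matrix.mul_zero]
  have e3 : (WE M)ᵀ * (U * Vᵀ) = 0 := by
    rw [← Matrix.mul_assoc, hWtU, Matrix.zero_mul]
  have hWcP : (U * Vᵀ - WE M)ᵀ * (U * Vᵀ - WE M)
      = V * Vᵀ + QE M * Matrix.diagonal (eE M) * (QE M)ᵀ := by
    rw [Matrix.transpose_sub, Matrix.sub_mul, Matrix.mul_sub, Matrix.mul_sub,
      e1, e2, e3, WEtWE]
    simp only [sub_zero, zero_sub, sub_neg_eq_add]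
  have hPs : (V * Vᵀ + QE M * Matrix.diagonal (eE M) * (QE M)ᵀ)ᵀ
      = V * Vᵀ + QE M * Matrix.diagonal (eE M) * (QE M)ᵀ := by
    rw [Matrix.transpose_add, Pe_symm, Matrix.transpose_mul, Matrix.transpose_transpose]
  have hVtQe : Vᵀ * (QE M * Matrix.diagonal (eE M)) = 0 := by
    have h := congrArg Matrix.transpose heQtV
    simpa [Matrix.transpose_mul, Matrix.diagonal_transpose, Matrix.mul_assoc] using h
  have cross1 : (V * Vᵀ) * (QE M * Matrix.diagonal (eE M) * (QE M)ᵀ) = 0 := by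
    calc (V * Vᵀ) * (QE M * Matrix.diagonal (eE M) * (QE M)ᵀ)
        = V * ((Vᵀ * (QE M * Matrix.diagonal (eE M))) * (QE M)ᵀ) := by
          simp only [Matrix.mul_assoc]
      _ = 0 := by rw [hVtQe, Matrix.zero_mul, Matrix.mul_zero]
  have cross2 : (QE M * Matrix.diagonal (eE M) * (QE M)ᵀ) * (V * Vᵀ) = 0 := by
    have h : Matrix.diagonal (eE M) * ((QE M)ᵀ * V) * Vᵀ = 0 := by
      rw [heQtV, Matrix.zero_mul]
    calc (QE M * Matrix.diagonal (eE M) * (QE M)ᵀ) * (V * Vᵀ)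
        = QE M * (Matrix.diagonal (eE M) * ((QE M)ᵀ * V) * Vᵀ) := by
          simp only [Matrix.mul_assoc]
      _ = 0 := by rw [h, Matrix.mul_zero]
  have e4 : (V * Vᵀ) * (V * Vᵀ) = V * Vᵀ := by
    calc (V * Vᵀ) * (V * Vᵀ) = V * ((Vᵀ * V) * Vᵀ) := by simp only [Matrix.mul_assoc]
      _ = V * Vᵀ := by rw [hV, Matrix.one_mul]
  have hPi : (V * Vᵀ + QE M * Matrix.diagonal (eE M) * (QE M)ᵀ)
      * (V * Vᵀ + QE M * Matrix.diagonal (eE M) * (QE M)ᵀ)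
      = V * Vᵀ + QE M * Matrix.diagonal (eE M) * (QE M)ᵀ := by
    rw [Matrix.add_mul, Matrix.mul_add, Matrix.mul_add, e4, cross1, cross2, Pe_idem]
    simp
  have hcontr : ∀ v, ((U * Vᵀ - WE M) *ᵥ v) ⬝ᵥ ((U * Vᵀ - WE M) *ᵥ v) ≤ v ⬝ᵥ v :=
    contraction_of _ _ hWcP hPs hPi
  have trB : Matrix.trace ((U * Vᵀ - WE M)ᵀ * B) ≤ nuclearNorm B := dual_bound B _ hcontr
  have trPD : Matrix.trace ((U * Vᵀ - WE M)ᵀ * PD) ≤ nuclearNorm PD := dual_bound PD _ hcontr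
  have trA : Matrix.trace ((U * Vᵀ - WE M)ᵀ * A) = ∑ i, σ i := by
    rw [Matrix.transpose_sub, Matrix.sub_mul, Matrix.trace_sub]
    have t1 : (U * Vᵀ)ᵀ * A = V * Matrix.diagonal σ * Vᵀ := by
      rw [hA, Matrix.transpose_mul, Matrix.transpose_transpose]
      calc V * Uᵀ * (U * Matrix.diagonal σ * Vᵀ)
          = V * ((Uᵀ * U) * (Matrix.diagonal σ * Vᵀ)) := by simp only [Matrix.mul_assoc]
        _ = V * (Matrix.diagonal σ * Vᵀ) := by rw [hU, Matrix.one_mul]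
        _ = V * Matrix.diagonal σ * Vᵀ := by rw [Matrix.mul_assoc]
    have t2 : (WE M)ᵀ * A = 0 := by
      rw [hA, ← Matrix.mul_assoc, ← Matrix.mul_assoc, hWtU, Matrix.zero_mul, Matrix.zero_mul]
    have t3 : Matrix.trace (V * Matrix.diagonal σ * Vᵀ) = ∑ i, σ i := by
      rw [Matrix.trace_mul_comm, ← Matrix.mul_assoc, hV, Matrix.one_mul, Matrix.trace_diagonal]
    rw [t1, t2, t3, Matrix.trace_zero, sub_zero]
  have trM : Matrix.trace ((U * Vᵀ - WE M)ᵀ * M) = - nuclearNorm M := by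
    rw [Matrix.transpose_sub, Matrix.sub_mul, Matrix.trace_sub, trace_WEt]
    have t4 : (U * Vᵀ)ᵀ * M = 0 := by
      rw [Matrix.transpose_mul, Matrix.transpose_transpose, Matrix.mul_assoc, hUtM,
        Matrix.mul_zero]
    rw [t4, Matrix.trace_zero, zero_sub]
  have hBdec : B = A - PD - M := by rw [hM, hD]; abel
  have trsum : Matrix.trace ((U * Vᵀ - WE M)ᵀ * B)
      = ∑ i, σ i - Matrix.trace ((U * Vᵀ - WE M)ᵀ * PD) + nuclearNorm M := by
    conv_lhs => rw [hBdec]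
    rw [Matrix.mul_sub, Matrix.mul_sub, Matrix.trace_sub, Matrix.trace_sub, trA, trM]
    ring
  -- nuclearNorm A ≤ ∑ σ
  have hAle : nuclearNorm A ≤ ∑ i, σ i := by
    rw [← trace_WEt A]
    nth_rewrite 2 [hA]
    have h1 : (WE A)ᵀ * (U * Matrix.diagonal σ * Vᵀ)
        = ((WE A)ᵀ * (U * Matrix.diagonal σ)) * Vᵀ := by
      simp only [Matrix.mul_assoc]
    rw [h1, Matrix.trace_mul_comm]
    have h2 : Vᵀ * ((WE A)ᵀ * (U * Matrix.diagonal σ))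
        = ((WE A * V)ᵀ * U) * Matrix.diagonal σ := by
      rw [Matrix.transpose_mul]
      simp only [← Matrix.mul_assoc]
    rw [h2]
    have h3 : Matrix.trace (((WE A * V)ᵀ * U) * Matrix.diagonal σ)
        = ∑ i, ((WE A * V)ᵀ * U) i i * σ i := by
      simp only [Matrix.trace, Matrix.diag, Matrix.mul_diagonal]
    rw [h3]
    refine Finset.sum_le_sum fun i _ => ?_
    have entry : ((WE A * V)ᵀ * U) i i
        = ∑ j, (WE A *ᵥ (fun k => V k i)) j * U j i := by
      simp [Matrix.mul_apply, Matrix.transpose_apply, Matrix.mulVec, dotProduct, mul_comm]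
    have hVcol : (fun k => V k i) ⬝ᵥ (fun k => V k i) = 1 := by
      have h4 := congrFun (congrFun hV i) i
      simpa [Matrix.mul_apply, Matrix.transpose_apply, dotProduct, Matrix.one_apply] using h4
    have hUcol : ∑ j, U j i ^ 2 = 1 := by
      have h4 := congrFun (congrFun hU i) i
      simpa [Matrix.mul_apply, Matrix.transpose_apply, pow_two, Matrix.one_apply] using h4
    have hWv : ∑ j, (WE A *ᵥ (fun k => V k i)) j ^ 2 ≤ 1 := by
      have h5 := WE_contr A (fun k => V k i)
      rw [hVcol] at h5
      calc ∑ j, (WE A *ᵥ (fun k => V k i)) j ^ 2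
          = (WE A *ᵥ (fun k => V k i)) ⬝ᵥ (WE A *ᵥ (fun k => V k i)) := by
            simp [dotProduct, pow_two]
        _ ≤ 1 := h5
    have hcs := Real.sum_mul_le_sqrt_mul_sqrt Finset.univ
      (fun j => (WE A *ᵥ (fun k => V k i)) j) (fun j => U j i)
    have hle1 : ((WE A * V)ᵀ * U) i i ≤ 1 := by
      rw [entry]
      calc ∑ j, (WE A *ᵥ (fun k => V k i)) j * U j i
          ≤ Real.sqrt (∑ j, (WE A *ᵥ (fun k => V k i)) j ^ 2)
            * Real.sqrt (∑ j, U j i ^ 2) := hcs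
        _ ≤ 1 * 1 := by
            rw [hUcol, Real.sqrt_one]
            exact mul_le_mul_of_nonneg_right (Real.sqrt_le_one.mpr hWv) zero_le_one
        _ = 1 := one_mul _
    exact mul_le_of_le_one_left (hσ i).le hle1
  linarith [trB, trPD, hAle, trsum.symm.le]
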